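/- arXiv:math/0505467 — 3 statements merged into one kernel-verified Lean document; each statement's English description precedes it below -/
import Mathlib

section
/- Let P_0 be a Noetherian ring, P = P_0[y_1,…,y_n] the standard graded polynomial ring over P_0, P_+ = (y_1,…,y_n), and M a finitely generated graded P-module with graded components M_i (each a finitely generated P_0-module). Then dim_{P_0} M_i ≤ dim_{P_0} M/P_+M for all i, where dim denotes Krull dimension of a P_0-module. -/
/-!
Formalization of Lemma 2.1 of "On the regularity of local cohomology of bigraded algebras"
(A. Rahimi): for a finitely generated graded module `M` over `P = P₀[y₁,…,yₙ]` (standard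
grading over a Noetherian ring `P₀`, graded components `Mᵢ` being `P₀`-modules), one has
`dim_{P₀} Mᵢ ≤ dim_{P₀} M/P₊M` for all `i`, where `P₊ = (y₁,…,yₙ)` and `dim_{P₀} N`
denotes the Krull dimension of `P₀ / Ann_{P₀} N`.
-/

open MvPolynomial

namespace Paper

lemma ringKrullDim_quotient_le_of_le_radical {R : Type*} [CommRing R] {I J : Ideal R}
    (h : J ≤ I.radical) :
    ringKrullDim (R ⧸ I) ≤ ringKrullDim (R ⧸ J) := by
  have hcom : ∀ q : PrimeSpectrum (R ⧸ I), J ≤ q.asIdeal.comap (Ideal.Quotient.mk I) := by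
    intro q
    haveI := q.isPrime
    refine h.trans ((Ideal.IsPrime.radical_le_iff inferInstance).mpr ?_)
    intro x hx
    show Ideal.Quotient.mk I x ∈ q.asIdeal
    rw [Ideal.Quotient.eq_zero_iff_mem.mpr hx]
    exact q.asIdeal.zero_mem
  let f : PrimeSpectrum (R ⧸ I) → PrimeSpectrum (R ⧸ J) := fun q =>
    ⟨(q.asIdeal.comap (Ideal.Quotient.mk I)).map (Ideal.Quotient.mk J),
      Ideal.map_isPrime_of_surjective Ideal.Quotient.mk_surjective
        (by rw [Ideal.mk_ker]; exact hcom q)⟩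
  have hmono : Monotone f := by
    intro q₁ q₂ hle
    exact Ideal.map_mono (Ideal.comap_mono hle)
  have hinj : Function.Injective f := by
    intro q₁ q₂ hfe
    have h1 : ((q₁.asIdeal.comap (Ideal.Quotient.mk I)).map (Ideal.Quotient.mk J))
        = ((q₂.asIdeal.comap (Ideal.Quotient.mk I)).map (Ideal.Quotient.mk J)) :=
      congrArg PrimeSpectrum.asIdeal hfe
    have h2 : ∀ q : PrimeSpectrum (R ⧸ I),
        ((q.asIdeal.comap (Ideal.Quotient.mk I)).map (Ideal.Quotient.mk J)).comap
          (Ideal.Quotient.mk J) = q.asIdeal.comap (Ideal.Quotient.mk I) := by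
      intro q
      rw [Ideal.comap_map_of_surjective _ Ideal.Quotient.mk_surjective]
      rw [← RingHom.ker_eq_comap_bot, Ideal.mk_ker]
      exact sup_eq_left.mpr (hcom q)
    have h3 : q₁.asIdeal.comap (Ideal.Quotient.mk I)
        = q₂.asIdeal.comap (Ideal.Quotient.mk I) := by
      rw [← h2 q₁, ← h2 q₂, h1]
    have h4 := congrArg (Ideal.map (Ideal.Quotient.mk I)) h3
    rw [Ideal.map_comap_of_surjective _ Ideal.Quotient.mk_surjective,
      Ideal.map_comap_of_surjective _ Ideal.Quotient.mk_surjective] at h4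
    exact PrimeSpectrum.ext h4
  exact Order.krullDim_le_of_strictMono f (hmono.strictMono_of_injective hinj)

section Aux

variable {P₀ : Type} [CommRing P₀] {n : ℕ}
  {M : Type} [AddCommGroup M] [Module P₀ M]
  [Module (MvPolynomial (Fin n) P₀) M]
  [IsScalarTower P₀ (MvPolynomial (Fin n) P₀) M]

omit [IsScalarTower P₀ (MvPolynomial (Fin n) P₀) M] in
lemma proj_smul_homog'
    (ℳ : ℤ → Submodule P₀ M) (π : ℤ → M →ₗ[P₀] M)
    (hsame : ∀ (j : ℤ) (x : M), x ∈ ℳ j → π j x = x)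
    (hne : ∀ (j l : ℤ) (x : M), x ∈ ℳ l → j ≠ l → π j x = 0)
    (htop : ∀ x : M, x ∈ ⨆ l, ℳ l)
    (hsmul : ∀ (d : ℕ) (p : MvPolynomial (Fin n) P₀), p.IsHomogeneous d →
      ∀ (i : ℤ) (x : M), x ∈ ℳ i → p • x ∈ ℳ (i + d))
    (d : ℕ) (p : MvPolynomial (Fin n) P₀) (hp : p.IsHomogeneous d) (j : ℤ) (x : M) :
    π j (p • x) = p • π (j - d) x := by
  refine Submodule.iSup_induction (motive := fun x => π j (p • x) = p • π (j - d) x)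
    ℳ (htop x) ?_ ?_ ?_
  · intro l y hy
    by_cases hj : j = l + d
    · subst hj
      rw [hsame _ _ (hsmul d p hp l y hy), add_sub_cancel_right, hsame _ _ hy]
    · rw [hne _ _ _ (hsmul d p hp l y hy) hj,
        hne (j - d) l y hy (by intro hc; exact hj (by omega)), smul_zero]
  · show (π j) (p • (0:M)) = p • (π (j - ↑d)) 0
    rw [smul_zero, map_zero, map_zero, smul_zero]
  · intro y z hy hz
    rw [smul_add, map_add, map_add, smul_add, hy, hz]

omit [IsScalarTower P₀ (MvPolynomial (Fin n) P₀) M] in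
lemma proj_smul_mem'
    (ℳ : ℤ → Submodule P₀ M) (π : ℤ → M →ₗ[P₀] M)
    (hsame : ∀ (j : ℤ) (x : M), x ∈ ℳ j → π j x = x)
    (hne : ∀ (j l : ℤ) (x : M), x ∈ ℳ l → j ≠ l → π j x = 0)
    (htop : ∀ x : M, x ∈ ⨆ l, ℳ l)
    (hsmul : ∀ (d : ℕ) (p : MvPolynomial (Fin n) P₀), p.IsHomogeneous d →
      ∀ (i : ℤ) (x : M), x ∈ ℳ i → p • x ∈ ℳ (i + d))
    (N : Submodule (MvPolynomial (Fin n) P₀) M) (p : MvPolynomial (Fin n) P₀)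
    (x : M) (j : ℤ) (h : ∀ d : ℕ, π (j - d) x ∈ N) :
    π j (p • x) ∈ N := by
  rw [← p.sum_homogeneousComponent, Finset.sum_smul, map_sum]
  refine Submodule.sum_mem _ fun d _ => ?_
  rw [proj_smul_homog' ℳ π hsame hne htop hsmul d _
    (homogeneousComponent_isHomogeneous d p) j x]
  exact N.smul_mem _ (h d)

omit [IsScalarTower P₀ (MvPolynomial (Fin n) P₀) M] in
/-- The degree `j' ≤ j` component of any element of `P₊ • M` lies in any `P`-submodule `N`
containing all the components `ℳ l` for `l < j`. -/
lemma proj_irrelevant_smul_mem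
    (ℳ : ℤ → Submodule P₀ M) (π : ℤ → M →ₗ[P₀] M)
    (hmem : ∀ (j : ℤ) (x : M), π j x ∈ ℳ j)
    (hsame : ∀ (j : ℤ) (x : M), x ∈ ℳ j → π j x = x)
    (hne : ∀ (j l : ℤ) (x : M), x ∈ ℳ l → j ≠ l → π j x = 0)
    (htop : ∀ x : M, x ∈ ⨆ l, ℳ l)
    (hsmul : ∀ (d : ℕ) (p : MvPolynomial (Fin n) P₀), p.IsHomogeneous d →
      ∀ (i : ℤ) (x : M), x ∈ ℳ i → p • x ∈ ℳ (i + d))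
    (N : Submodule (MvPolynomial (Fin n) P₀) M) (j : ℤ)
    (hN : ∀ l : ℤ, l < j → ∀ x ∈ ℳ l, x ∈ N)
    (y : M)
    (hy : y ∈ (Ideal.span (Set.range (X : Fin n → MvPolynomial (Fin n) P₀)) •
      (⊤ : Submodule (MvPolynomial (Fin n) P₀) M))) :
    ∀ j' ≤ j, π j' y ∈ N := by
  refine Submodule.smul_induction_on hy ?_ ?_
  · intro r hr m _
    induction hr using Submodule.span_induction with
    | mem r hrX =>
      obtain ⟨s, rfl⟩ := hrX
      intro j' hj'
      rw [proj_smul_homog' ℳ π hsame hne htop hsmul 1 (X s) (isHomogeneous_X _ _) j' m]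
      exact N.smul_mem _ (hN _ (by omega) _ (hmem _ m))
    | zero =>
      intro j' _
      rw [zero_smul, map_zero]; exact N.zero_mem
    | add r₁ r₂ h₁ h₂ ih₁ ih₂ =>
      intro j' hj'
      rw [add_smul, map_add]
      exact N.add_mem (ih₁ j' hj') (ih₂ j' hj')
    | smul p r hr ih =>
      intro j' hj'
      rw [smul_eq_mul, mul_smul]
      refine proj_smul_mem' ℳ π hsame hne htop hsmul N p (r • m) j' fun d => ?_
      exact ih _ (by omega)
  · intro y₁ y₂ ih₁ ih₂ j' hj'
    rw [map_add]
    exact N.add_mem (ih₁ j' hj') (ih₂ j' hj')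

end Aux

/-- **Lemma (paper, Lemma 2.1).** -/
theorem dim_of_graded_component_le_dim_of_quotient_by_irrelevant_ideal
    (P₀ : Type) [CommRing P₀] [IsNoetherianRing P₀] (n : ℕ)
    (M : Type) [AddCommGroup M]
    [Module P₀ M] [Module (MvPolynomial (Fin n) P₀) M]
    [IsScalarTower P₀ (MvPolynomial (Fin n) P₀) M]
    [Module.Finite (MvPolynomial (Fin n) P₀) M]
    -- a grading of `M` by `P₀`-submodules, compatible with the standard grading of `P`:
    (ℳ : ℤ → Submodule P₀ M)
    (hdecomp : DirectSum.IsInternal ℳ)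
    (hsmul : ∀ (d : ℕ) (p : MvPolynomial (Fin n) P₀), p.IsHomogeneous d →
      ∀ (i : ℤ) (x : M), x ∈ ℳ i → p • x ∈ ℳ (i + d))
    (i : ℤ) :
    ringKrullDim (P₀ ⧸ Module.annihilator P₀ ↥(ℳ i)) ≤
      ringKrullDim (P₀ ⧸ Module.annihilator P₀
        (M ⧸ Submodule.restrictScalars P₀
          ((Ideal.span (Set.range (MvPolynomial.X : Fin n → MvPolynomial (Fin n) P₀))) •
            (⊤ : Submodule (MvPolynomial (Fin n) P₀) M)))) := by
  classical
  apply ringKrullDim_quotient_le_of_le_radical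
  intro a ha
  -- the projections onto the graded components
  let e : (DirectSum ℤ fun l => ↥(ℳ l)) ≃ₗ[P₀] M :=
    LinearEquiv.ofBijective (DirectSum.coeLinearMap ℳ) hdecomp
  let π : ℤ → M →ₗ[P₀] M := fun j =>
    (ℳ j).subtype ∘ₗ (DirectSum.component P₀ ℤ (fun l => ↥(ℳ l)) j) ∘ₗ e.symm.toLinearMap
  have hπ : ∀ (j : ℤ) (x : M), π j x = ↑(e.symm x j) := fun j x => rfl
  have hmem : ∀ (j : ℤ) (x : M), π j x ∈ ℳ j := fun j x => (e.symm x j).2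
  have hsame : ∀ (j : ℤ) (x : M), x ∈ ℳ j → π j x = x := by
    intro j x hx
    rw [hπ, hdecomp.ofBijective_coeLinearMap_of_mem hx]
  have hne : ∀ (j l : ℤ) (x : M), x ∈ ℳ l → j ≠ l → π j x = 0 := by
    intro j l x hx hjl
    rw [hπ, hdecomp.ofBijective_coeLinearMap_of_mem_ne (Ne.symm hjl) hx,
      ZeroMemClass.coe_zero]
  have htop : ∀ x : M, x ∈ ⨆ l, ℳ l := by
    rw [hdecomp.submodule_iSup_eq_top]; exact fun x => trivial
  -- `a` maps `M` into `P₊ • M`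
  have haM : ∀ m : M, a • m ∈
      ((Ideal.span (Set.range (MvPolynomial.X : Fin n → MvPolynomial (Fin n) P₀))) •
        (⊤ : Submodule (MvPolynomial (Fin n) P₀) M)) := by
    intro m
    have h0 := Module.mem_annihilator.mp ha (Submodule.Quotient.mk m)
    rw [← Submodule.Quotient.mk_smul, Submodule.Quotient.mk_eq_zero] at h0
    exact h0
  -- `a` preserves degrees
  have ha0 : ∀ (j : ℤ) (x : M), x ∈ ℳ j → a • x ∈ ℳ j := by
    intro j x hx
    have h := hsmul 0 (C a) (isHomogeneous_C _ _) j x hx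
    rw [Nat.cast_zero, add_zero] at h
    rwa [show ((C a : MvPolynomial (Fin n) P₀) • x) = a • x by
      rw [← MvPolynomial.algebraMap_eq, algebraMap_smul]] at h
  -- the `P`-submodules of elements killed by `a ^ k`
  let W : ℕ → Submodule (MvPolynomial (Fin n) P₀) M := fun k =>
    { carrier := {x : M | a ^ k • x = 0}
      add_mem' := fun hx hy => by
        simp only [Set.mem_setOf_eq, smul_add] at *
        rw [hx, hy, add_zero]
      zero_mem' := smul_zero _
      smul_mem' := fun p x hx => by
        simp only [Set.mem_setOf_eq] at *
        rw [smul_comm, hx, smul_zero] }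
  -- a lower bound for the degrees of a finite generating system
  obtain ⟨s, hs⟩ : (⊤ : Submodule (MvPolynomial (Fin n) P₀) M).FG :=
    Module.finite_def.mp inferInstance
  let T : Finset ℤ := s.sup fun g => (e.symm g).support
  let B : ℕ := T.sup fun t => t.natAbs
  let i₀ : ℤ := -(B : ℤ)
  have hT : ∀ t ∈ T, i₀ ≤ t := by
    intro t ht
    have h1 : t.natAbs ≤ B := Finset.le_sup (f := fun t : ℤ => t.natAbs) ht
    omega
  have hgen : ∀ g ∈ s, ∀ j' : ℤ, j' < i₀ → π j' g = 0 := by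
    intro g hg j' hj'
    have h1 : j' ∉ (e.symm g).support := by
      intro hmem'
      have h2 : j' ∈ T :=
        Finset.le_sup (f := fun g : M => (e.symm g).support) hg hmem'
      exact absurd (hT _ h2) (by omega)
    rw [hπ, DFinsupp.notMem_support_iff.mp h1, ZeroMemClass.coe_zero]
  -- the graded components below `i₀` vanish
  have hbelow : ∀ j : ℤ, j < i₀ → ∀ x ∈ ℳ j, x = 0 := by
    intro j hj x hx
    rw [← hsame j x hx]
    have hxs : x ∈ Submodule.span (MvPolynomial (Fin n) P₀) (s : Set M) := by
      rw [hs]; trivial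
    refine Submodule.span_induction (p := fun y _ => ∀ j' : ℤ, j' < i₀ → π j' y = 0)
      ?_ ?_ ?_ ?_ hxs j hj
    · exact fun g hg => hgen g hg
    · intro j' _; exact map_zero _
    · intro y z _ _ ihy ihz j' hj'
      rw [map_add, ihy j' hj', ihz j' hj', add_zero]
    · intro p y _ ih j' hj'
      have h1 : π j' (p • y) ∈ (⊥ : Submodule (MvPolynomial (Fin n) P₀) M) :=
        proj_smul_mem' ℳ π hsame hne htop hsmul ⊥ p y j' fun d => by
          rw [ih _ (by omega)]; exact Submodule.zero_mem _
      simpa using h1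
  -- the inductive step
  have hstep : ∀ (k : ℕ) (j : ℤ), (∀ l : ℤ, l < j → ∀ x ∈ ℳ l, x ∈ W k) →
      ∀ x ∈ ℳ j, x ∈ W (k + 1) := by
    intro k j hIH x hx
    have hax : a • x ∈ ℳ j := ha0 j x hx
    have h1 : π j (a • x) ∈ W k :=
      proj_irrelevant_smul_mem ℳ π hmem hsame hne htop hsmul (W k) j hIH
        (a • x) (haM x) j le_rfl
    rw [hsame j _ hax] at h1
    show a ^ (k + 1) • x = 0
    have h2 : a ^ k • (a • x) = 0 := h1
    rwa [smul_smul, ← pow_succ] at h2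
  -- main induction
  have hmain : ∀ (N : ℕ) (j : ℤ), j < i₀ + N → ∀ x ∈ ℳ j, x ∈ W N := by
    intro N
    induction N with
    | zero =>
      intro j hj x hx
      show a ^ 0 • x = 0
      rw [hbelow j (by omega) x hx, smul_zero]
    | succ N ih =>
      intro j hj x hx
      exact hstep N j (fun l hl y hy => ih l (by omega) y hy) x hx
  -- conclusion
  refine Ideal.mem_radical_iff.mpr ⟨(i - i₀).toNat + 1, ?_⟩
  rw [Module.mem_annihilator]
  rintro ⟨m, hm⟩
  have h3 : a ^ ((i - i₀).toNat + 1) • m = 0 :=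
    hmain _ i (by omega) m hm
  exact Subtype.ext (by simpa using h3)


end Paper
end

section
/- Let P_0 be a Noetherian ring, P = P_0[y_1,…,y_n] the standard graded polynomial ring over P_0, and M a finitely generated graded P-module with graded components M_i. Then there exists an integer i_0 such that Ann_{P_0} M_i = Ann_{P_0} M_{i+1} for all i ≥ i_0. -/
/-!
Formalization of Lemma 2.2 of "On the regularity of local cohomology of bigraded algebras"
(A. Rahimi): for a finitely generated graded module `M` over `P = P₀[y₁,…,yₙ]` (standard
grading over a Noetherian ring `P₀`, graded components `Mᵢ` being `P₀`-modules), the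
annihilators `Ann_{P₀} Mᵢ` stabilize: there is `i₀` with `Ann_{P₀} Mᵢ = Ann_{P₀} M_{i+1}`
for all `i ≥ i₀`.
-/

open MvPolynomial

namespace Paper

section Aux

variable (P₀ : Type) [CommRing P₀] (n : ℕ)
    (M : Type) [AddCommGroup M]
    [Module P₀ M] [Module (MvPolynomial (Fin n) P₀) M]
    [IsScalarTower P₀ (MvPolynomial (Fin n) P₀) M]
    (ℳ : ℤ → Submodule P₀ M)

/-- Key step: if `q` is homogeneous of degree `e+1` and `h ∈ ℳ j`, and `a`
annihilates `ℳ (j+e)`, then `a • (q • h) = 0`. -/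
theorem aux_kill
    (hsmul : ∀ (d : ℕ) (p : MvPolynomial (Fin n) P₀), p.IsHomogeneous d →
      ∀ (i : ℤ) (x : M), x ∈ ℳ i → p • x ∈ ℳ (i + d))
    (e : ℕ) (q : MvPolynomial (Fin n) P₀) (hq : q.IsHomogeneous (e + 1))
    (j : ℤ) (h : M) (hh : h ∈ ℳ j) (a : P₀)
    (ha : ∀ z ∈ ℳ (j + e), a • z = 0) :
    a • (q • h) = 0 := by
  classical
  rw [q.as_sum, Finset.sum_smul, Finset.smul_sum]
  refine Finset.sum_eq_zero fun m hm => ?_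
  -- the monomial has degree `e+1`
  have hdeg : m.degree = e + 1 := by
    by_contra hne
    exact (MvPolynomial.mem_support_iff.mp hm) (hq.coeff_eq_zero hne)
  -- pick a variable occurring in `m`
  have hm0 : m ≠ 0 := by
    intro h0
    rw [h0, map_zero] at hdeg
    omega
  obtain ⟨j₀, hj₀⟩ : ∃ j₀, m j₀ ≠ 0 := by
    by_contra hall
    push_neg at hall
    exact hm0 (Finsupp.ext fun i => hall i)
  set m' : Fin n →₀ ℕ := m - Finsupp.single j₀ 1 with hm'
  have hsplit : Finsupp.single j₀ 1 + m' = m := by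
    ext i
    rw [Finsupp.add_apply, hm', Finsupp.tsub_apply]
    rcases eq_or_ne j₀ i with rfl | hij
    · rw [Finsupp.single_eq_same]; omega
    · rw [Finsupp.single_eq_of_ne' hij]; omega
  have hdeg' : m'.degree = e := by
    have : (Finsupp.single j₀ 1 + m').degree = e + 1 := by rw [hsplit]; exact hdeg
    have hsingle : (Finsupp.single j₀ 1 : Fin n →₀ ℕ).degree = 1 := by
      simp [Finsupp.degree_eq_weight_one, Finsupp.weight_apply,
        Finsupp.sum_single_index]
    rw [Finsupp.degree_eq_weight_one] at this hsingle ⊢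
    rw [map_add, hsingle] at this
    omega
  have hmono : (monomial m) (coeff m q) = X j₀ * (monomial m') (coeff m q) := by
    rw [← hsplit, monomial_single_add, pow_one]
  rw [hmono, mul_smul]
  have hmem : (monomial m') (coeff m q) • h ∈ ℳ (j + e) :=
    hsmul e _ (isHomogeneous_monomial _ hdeg') j h hh
  rw [smul_comm a (X j₀ : MvPolynomial (Fin n) P₀), ha _ hmem, smul_zero]

end Aux

/-- **Lemma (paper, Lemma 2.2).** -/
theorem annihilators_of_graded_components_stabilize
    (P₀ : Type) [CommRing P₀] [IsNoetherianRing P₀] (n : ℕ)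
    (M : Type) [AddCommGroup M]
    [Module P₀ M] [Module (MvPolynomial (Fin n) P₀) M]
    [IsScalarTower P₀ (MvPolynomial (Fin n) P₀) M]
    [Module.Finite (MvPolynomial (Fin n) P₀) M]
    -- a grading of `M` by `P₀`-submodules, compatible with the standard grading of `P`:
    (ℳ : ℤ → Submodule P₀ M)
    (hdecomp : DirectSum.IsInternal ℳ)
    (hsmul : ∀ (d : ℕ) (p : MvPolynomial (Fin n) P₀), p.IsHomogeneous d →
      ∀ (i : ℤ) (x : M), x ∈ ℳ i → p • x ∈ ℳ (i + d)) :
    ∃ i₀ : ℤ, ∀ i : ℤ, i₀ ≤ i →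
      Module.annihilator P₀ ↥(ℳ i) = Module.annihilator P₀ ↥(ℳ (i + 1)) := by
  classical
  letI : DirectSum.Decomposition ℳ := hdecomp.chooseDecomposition
  -- the degree-`i` projection, as a `P₀`-linear map
  let π : ℤ → M →ₗ[P₀] M := fun i =>
    (ℳ i).subtype ∘ₗ (DFinsupp.lapply i) ∘ₗ (DirectSum.decomposeLinearEquiv ℳ).toLinearMap
  have hπ : ∀ (i : ℤ) (x : M), π i x = (DirectSum.decompose ℳ x i : M) := fun _ _ => rfl
  -- projection of `p • x` for `x ∈ ℳ j`
  have hproj : ∀ (p : MvPolynomial (Fin n) P₀) (j i : ℤ) (x : M), x ∈ ℳ j → j ≤ i →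
      π i (p • x) = (homogeneousComponent (i - j).toNat p) • x := by
    intro p j i x hx hji
    conv_lhs => rw [← MvPolynomial.sum_homogeneousComponent p]
    rw [Finset.sum_smul, map_sum]
    have hterm : ∀ d ∈ Finset.range (p.totalDegree + 1),
        π i ((homogeneousComponent d p) • x) =
          if d = (i - j).toNat then (homogeneousComponent d p) • x else 0 := by
      intro d _
      have hmem : (homogeneousComponent d p) • x ∈ ℳ (j + d) :=
        hsmul d _ (homogeneousComponent_isHomogeneous d p) j x hx
      by_cases hd : d = (i - j).toNat
      · rw [if_pos hd]
        have hji' : (j + d : ℤ) = i := by omega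
        rw [hπ, ← hji']
        exact DirectSum.decompose_of_mem_same ℳ hmem
      · rw [if_neg hd, hπ]
        exact DirectSum.decompose_of_mem_ne ℳ hmem (by omega)
    rw [Finset.sum_congr rfl hterm, Finset.sum_ite_eq' _ ((i - j).toNat)]
    by_cases ht : (i - j).toNat ∈ Finset.range (p.totalDegree + 1)
    · rw [if_pos ht]
    · rw [if_neg ht]
      rw [homogeneousComponent_eq_zero _ p
        (by simpa using lt_of_not_ge fun hle => ht (Finset.mem_range.mpr (by omega))),
        zero_smul]
  -- finite homogeneous generating set
  obtain ⟨s, hs⟩ : (⊤ : Submodule (MvPolynomial (Fin n) P₀) M).FG := Module.Finite.fg_top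
  let T : Finset (ℤ × M) := s.biUnion fun g =>
    (DirectSum.decompose ℳ g).support.image fun d => (d, ((DirectSum.decompose ℳ g) d : M))
  have hT : ∀ p ∈ T, p.2 ∈ ℳ p.1 := by
    intro p hp
    obtain ⟨g, -, hg⟩ := Finset.mem_biUnion.mp hp
    obtain ⟨d, -, hd⟩ := Finset.mem_image.mp hg
    rw [← hd]
    exact ((DirectSum.decompose ℳ g) d).2
  -- bound on degrees of generators
  let b : ℤ := (insert (0 : ℤ) (T.image Prod.fst)).max' (by simp)
  have hb : ∀ p ∈ T, p.1 ≤ b := fun p hp =>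
    Finset.le_max' _ _ (Finset.mem_insert_of_mem (Finset.mem_image_of_mem _ hp))
  -- the second components of `T` generate `M` over `P`
  have hspan : Submodule.span (MvPolynomial (Fin n) P₀) ((T.image Prod.snd : Finset M) : Set M)
      = ⊤ := by
    rw [eq_top_iff, ← hs, Submodule.span_le]
    intro g hg
    have : g = ∑ d ∈ (DirectSum.decompose ℳ g).support, ((DirectSum.decompose ℳ g) d : M) :=
      (DirectSum.sum_support_decompose ℳ g).symm
    rw [this]
    refine Submodule.sum_mem _ fun d hd => Submodule.subset_span ?_
    refine Finset.mem_coe.mpr (Finset.mem_image.mpr ⟨(d, ((DirectSum.decompose ℳ g) d : M)), ?_, rfl⟩)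
    exact Finset.mem_biUnion.mpr ⟨g, hg, Finset.mem_image_of_mem _ hd⟩
  -- the chain of annihilators is increasing from degree `b` on
  have hstep : ∀ i : ℤ, b ≤ i →
      Module.annihilator P₀ ↥(ℳ i) ≤ Module.annihilator P₀ ↥(ℳ (i + 1)) := by
    intro i hbi a ha
    rw [Module.mem_annihilator] at ha ⊢
    have ha' : ∀ z ∈ ℳ i, a • z = 0 := by
      intro z hz
      have := ha ⟨z, hz⟩
      rwa [Subtype.ext_iff] at this
    intro x
    rw [Subtype.ext_iff]
    show a • (x : M) = 0
    obtain ⟨f, -, hf⟩ := Submodule.mem_span_finset.mp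
      (hspan ▸ Submodule.mem_top : (x : M) ∈ Submodule.span (MvPolynomial (Fin n) P₀)
        ((T.image Prod.snd : Finset M) : Set M))
    have hx : (x : M) = π (i + 1) (x : M) := by
      rw [hπ, DirectSum.decompose_of_mem_same ℳ x.2]
    rw [hx, ← hf, map_sum, Finset.smul_sum]
    refine Finset.sum_eq_zero fun h hh => ?_
    obtain ⟨⟨d, h'⟩, hdT, hdh⟩ := Finset.mem_image.mp hh
    simp only at hdh
    subst hdh
    have hhm : h' ∈ ℳ d := hT _ hdT
    have hdb : d ≤ i := le_trans (hb _ hdT) hbi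
    rw [hproj (f h') d (i + 1) h' hhm (by omega)]
    set e : ℕ := (i - d).toNat with he
    have he1 : (i + 1 - d).toNat = e + 1 := by omega
    rw [he1]
    refine aux_kill P₀ n M ℳ hsmul e _ (homogeneousComponent_isHomogeneous (e + 1) (f h'))
      d h' hhm a ?_
    have hde : (d + e : ℤ) = i := by omega
    rw [hde]
    exact ha'
  -- conclude by Noetherianity
  let F : ℕ →o Ideal P₀ :=
    ⟨fun k => Module.annihilator P₀ ↥(ℳ (b + k)),
      monotone_nat_of_le_succ fun k => by
        have h := hstep (b + k) (by omega)
        have hcast : (b + ((k + 1 : ℕ) : ℤ)) = b + k + 1 := by push_cast; ring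
        rw [hcast]
        exact h⟩
  obtain ⟨N, hN⟩ := monotone_stabilizes_iff_noetherian.mpr
    (inferInstance : IsNoetherian P₀ P₀) F
  refine ⟨b + N, fun i hi => ?_⟩
  have harg1 : (b + ((i - b).toNat : ℤ)) = i := by omega
  have harg2 : (b + (((i - b).toNat + 1 : ℕ) : ℤ)) = i + 1 := by omega
  have h1 : F (i - b).toNat = Module.annihilator P₀ ↥(ℳ i) := by
    show Module.annihilator P₀ ↥(ℳ (b + ((i - b).toNat : ℤ))) = _
    rw [harg1]
  have h2 : F ((i - b).toNat + 1) = Module.annihilator P₀ ↥(ℳ (i + 1)) := by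
    show Module.annihilator P₀ ↥(ℳ (b + (((i - b).toNat + 1 : ℕ) : ℤ))) = _
    rw [harg2]
  rw [← h1, ← h2, ← hN _ (show N ≤ (i - b).toNat by omega),
    ← hN _ (show N ≤ (i - b).toNat + 1 by omega)]

end Paper
end

section
/- Let f ∈ P = K[x_1,…,x_m,y_1,…,y_n] be bihomogeneous of bidegree (a,b) and R = P/fP. For j ≤ −n let U_j ⊆ F_j = ⊕_{|c| = −n−j} P_0 z^c be the image of the map ⊕_{|c| = −n−j+b} P_0(−a) z^c → F_j induced by multiplication by f on H^n_{P_+}(P), with the basis elements z^c ordered lexicographically by z_1 > ⋯ > z_n. For a monomial u of degree −n−j in z_1,…,z_n, let I_{j,u} ⊆ P_0 be the ideal generated by the initial coefficients of those elements of U_j whose initial monomial is u. Then I_{j,u} = I_{j-1, z_1 u} for all j ≤ −n and all monomials u of degree −n−j. -/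
/-!
Formalization of a statement from "On the regularity of local cohomology of bigraded algebras"
(A. Rahimi). Here `P₀ = K[x₁,…,x_m]`, `P = P₀[y₁,…,yₙ]` is bigraded with `deg xᵢ = (1,0)`,
`deg yⱼ = (0,1)`, and `P₊ = (y₁,…,yₙ)`.  The top local cohomology `H^n_{P₊}(P)` is the free
`P₀`-module `⊕_c P₀ z^c` (`c : Fin n →₀ ℕ`, `z^c` of bidegree `(0, -n - |c|)`), on which a
bihomogeneous `f = Σ_β f_β y^β ∈ P` acts by the contraction `f ⬝ z^c = Σ_{β ≤ c} f_β z^{c-β}`.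
For a hypersurface ring `R = P/fP` this yields the exact presentation
`⊕_{|c| = -n-j+b} P₀(-a) z^c → ⊕_{|c| = -n-j} P₀ z^c → H^n_{P₊}(R)_j → 0`
(with `(a,b) = bideg f`), and `H^{n-1}_{P₊}(R)_j` is the kernel of the first map.
-/

open MvPolynomial

namespace Paper

/-- Total degree of an exponent vector. -/
def tdeg {n : ℕ} (c : Fin n →₀ ℕ) : ℕ := c.sum fun _ e => e

variable (A : Type) [CommRing A] (n : ℕ)

/-- The underlying module of the top local cohomology `H^n_{P₊}(P)` of `P = A[y₁,…,yₙ]`: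
the free `A`-module with basis `z^c`, `c : Fin n →₀ ℕ` (`z^c` lies in `y`-degree `-n - |c|`). -/
abbrev Wmod := (Fin n →₀ ℕ) →₀ A

/-- The free `A`-submodule of `Wmod` spanned by the `z^c` with `|c| = k`;
this is the graded component `H^n_{P₊}(P)_j` for `j = -n-k`. -/
noncomputable def Fk (k : ℕ) : Submodule A (Wmod A n) :=
  Finsupp.supported A A {c | tdeg c = k}

open scoped Classical in
/-- The contraction action of `f ∈ P = A[y₁,…,yₙ]` on `H^n_{P₊}(P)`:
`f ⬝ z^c = Σ_{β ≤ c} f_β z^{c-β}`, where `f = Σ_β f_β y^β` with `f_β ∈ A`. -/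
noncomputable def contract (f : MvPolynomial (Fin n) A) :
    Wmod A n →ₗ[A] Wmod A n :=
  Finsupp.lsum A fun c =>
    (LinearMap.id : A →ₗ[A] A).smulRight
      (f.support.sum fun β => if β ≤ c then Finsupp.single (c - β) (MvPolynomial.coeff β f) else 0)

variable (K : Type) [Field K] (m : ℕ)

/-- `f ∈ P = K[x₁,…,x_m][y₁,…,yₙ]` is bihomogeneous of bidegree `(a,b)`:
every monomial `x^ν y^β` occurring in `f` has `|ν| = a` and `|β| = b`. -/
def IsBihom (f : MvPolynomial (Fin n) (MvPolynomial (Fin m) K)) (a b : ℕ) : Prop :=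
  ∀ β ν, MvPolynomial.coeff ν (MvPolynomial.coeff β f) ≠ 0 → tdeg ν = a ∧ tdeg β = b

/-- The `x`-degree-`i` strand of `Wmod` (coefficients homogeneous of degree `i`). -/
def strandW (i : ℤ) : Submodule K (Wmod (MvPolynomial (Fin m) K) n) where
  carrier := {w | ∀ c ν, MvPolynomial.coeff ν (w c) ≠ 0 → (tdeg ν : ℤ) = i}
  add_mem' := by
    intro a b ha hb c ν h
    rw [Finsupp.add_apply, MvPolynomial.coeff_add] at h
    by_cases h1 : MvPolynomial.coeff ν (a c) ≠ 0
    · exact ha c ν h1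
    · push_neg at h1
      exact hb c ν (by simpa [h1] using h)
  zero_mem' := by intro c ν h; simp at h
  smul_mem' := by
    intro k w hw c ν h
    rw [Finsupp.smul_apply, MvPolynomial.coeff_smul] at h
    exact hw c ν (right_ne_zero_of_smul h)

/-- The submodule `U_j ⊆ F_j = ⊕_{|c| = t} P₀ z^c` (`j = -n-t`): the image of
`⊕_{|c| = t+b} P₀(-a) z^c` under multiplication by `f` on `H^n_{P₊}(P)`. -/
noncomputable def Uf (f : MvPolynomial (Fin n) (MvPolynomial (Fin m) K)) (t b : ℕ) :
    Submodule (MvPolynomial (Fin m) K) (Wmod (MvPolynomial (Fin m) K) n) :=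
  Submodule.map (contract (MvPolynomial (Fin m) K) n f) (Fk (MvPolynomial (Fin m) K) n (t + b))

/-- The graded component `H^n_{P₊}(P/fP)_j`, `j = -n-t`, realized as the image of
`F_j = ⊕_{|c| = t} P₀ z^c` in `Wmod/U_j`; i.e. the cokernel `F_j/U_j` of the presentation. -/
noncomputable def topH (f : MvPolynomial (Fin n) (MvPolynomial (Fin m) K)) (t b : ℕ) :
    Submodule (MvPolynomial (Fin m) K)
      ((Wmod (MvPolynomial (Fin m) K) n) ⧸ Uf n K m f t b) :=
  Submodule.map (Uf n K m f t b).mkQ (Fk (MvPolynomial (Fin m) K) n t)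

/-- The `x`-degree-`i` component of `H^n_{P₊}(P/fP)_j`, `j = -n-t`, inside `Wmod/U_j`. -/
noncomputable def topHcomp (f : MvPolynomial (Fin n) (MvPolynomial (Fin m) K)) (t b : ℕ)
    (i : ℤ) : Submodule K ((Wmod (MvPolynomial (Fin m) K) n) ⧸ Uf n K m f t b) :=
  Submodule.map ((Uf n K m f t b).mkQ.restrictScalars K)
    (strandW n K m i ⊓ (Fk (MvPolynomial (Fin m) K) n t).restrictScalars K)

/-- The grading (by `x`-degree) of `H^n_{P₊}(P/fP)_j`, `j = -n-t`. -/
noncomputable def topHgr (f : MvPolynomial (Fin n) (MvPolynomial (Fin m) K)) (t b : ℕ)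
    (i : ℤ) : Submodule K ↥(topH n K m f t b) :=
  Submodule.comap ((topH n K m f t b).subtype.restrictScalars K) (topHcomp n K m f t b i)

/-- `H^{n-1}_{P₊}(P/fP)_j`, `j = -n-t`: the kernel of multiplication by `f` from
`⊕_{|c| = t+b} P₀(-a) z^c` to `⊕_{|c| = t} P₀ z^c`. -/
noncomputable def syzM (f : MvPolynomial (Fin n) (MvPolynomial (Fin m) K)) (t b : ℕ) :
    Submodule (MvPolynomial (Fin m) K) (Wmod (MvPolynomial (Fin m) K) n) :=
  LinearMap.ker (contract (MvPolynomial (Fin m) K) n f) ⊓ Fk (MvPolynomial (Fin m) K) n (t + b)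

/-- The grading of `H^{n-1}_{P₊}(P/fP)_j`, `j = -n-t`: since it lives inside
`⊕_{|c| = t+b} P₀(-a) z^c`, its degree-`i` component consists of the elements whose
coefficients are homogeneous of degree `i - a`. -/
noncomputable def syzGr (f : MvPolynomial (Fin n) (MvPolynomial (Fin m) K)) (t b a : ℕ)
    (i : ℤ) : Submodule K ↥(syzM n K m f t b) :=
  Submodule.comap ((syzM n K m f t b).subtype.restrictScalars K) (strandW n K m (i - a))

/-- The ideal `I_{j,u} ⊆ P₀` of initial coefficients: it is generated by the coefficients
`h_u` of those nonzero `h ∈ U_j` whose initial monomial (the lexicographically largest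
`z^v`, for the order induced by `z₁ > z₂ > ⋯ > zₙ`, with `h_v ≠ 0`) is `z^u`. -/
noncomputable def iniIdeal (Uj : Submodule (MvPolynomial (Fin m) K) (Wmod (MvPolynomial (Fin m) K) n))
    (u : Fin n →₀ ℕ) : Ideal (MvPolynomial (Fin m) K) :=
  Ideal.span {p | ∃ h ∈ Uj, h u = p ∧ h u ≠ 0 ∧ ∀ v, h v ≠ 0 → toLex v ≤ toLex u}


lemma contract_apply' (f : MvPolynomial (Fin n) A) (g : Wmod A n) (w : Fin n →₀ ℕ) :
    contract A n f g w = ∑ β ∈ f.support, g (w + β) * MvPolynomial.coeff β f := by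
  classical
  rw [contract]
  rw [Finsupp.lsum_apply]
  rw [Finsupp.sum_apply]
  have : ∀ c (a : A),
      ((LinearMap.id : A →ₗ[A] A).smulRight
        (f.support.sum fun β => if β ≤ c then Finsupp.single (c - β) (MvPolynomial.coeff β f) else 0) a) w
      = ∑ β ∈ f.support, (if c = w + β then a * MvPolynomial.coeff β f else 0) := by
    intro c a
    simp only [LinearMap.smulRight_apply, LinearMap.id_apply, Finsupp.smul_apply,
      Finsupp.finset_sum_apply, Finset.smul_sum]
    refine Finset.sum_congr rfl fun β _ => ?_
    by_cases h : c = w + β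
    · subst h
      rw [if_pos (le_add_self), if_pos rfl]
      simp [add_tsub_cancel_left]
    · by_cases h2 : β ≤ c
      · rw [if_pos h2, if_neg h]
        rw [Finsupp.single_apply, if_neg, smul_zero]
        intro hc; apply h
        rw [← hc, tsub_add_cancel_of_le h2]
      · rw [if_neg h2, if_neg h]; simp
  rw [Finsupp.sum]
  rw [Finset.sum_congr rfl fun c _ => this c (g c)]
  rw [Finset.sum_comm]
  refine Finset.sum_congr rfl fun β _ => ?_
  rw [Finset.sum_ite_eq' g.support (w + β) (fun c => g c * MvPolynomial.coeff β f)]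
  by_cases h : w + β ∈ g.support
  · rw [if_pos h]
  · rw [if_neg h]
    rw [Finsupp.notMem_support_iff.mp h, zero_mul]

lemma tdeg_add' {n : ℕ} (c d : Fin n →₀ ℕ) : tdeg (c + d) = tdeg c + tdeg d := by
  unfold tdeg
  rw [Finsupp.sum_add_index] <;> simp

lemma tdeg_single_one' {n : ℕ} (i : Fin n) : tdeg (Finsupp.single i 1) = 1 := by
  simp [tdeg]

lemma contract_mapDomain' (f : MvPolynomial (Fin n) A) (g : Wmod A n) (e v : Fin n →₀ ℕ) :
    contract A n f (Finsupp.mapDomain (· + e) g) (v + e) = contract A n f g v := by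
  rw [contract_apply', contract_apply']
  refine Finset.sum_congr rfl fun β _ => ?_
  congr 1
  have h : v + e + β = (v + β) + e := by rw [add_right_comm]
  rw [h, Finsupp.mapDomain_apply (add_left_injective e)]

lemma contract_comapDomain' (f : MvPolynomial (Fin n) A) (g' : Wmod A n) (e w : Fin n →₀ ℕ) :
    contract A n f (Finsupp.comapDomain (· + e) g' (add_left_injective e).injOn) w
      = contract A n f g' (w + e) := by
  rw [contract_apply', contract_apply']
  refine Finset.sum_congr rfl fun β _ => ?_
  congr 1
  rw [Finsupp.comapDomain_apply, add_right_comm]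

/-- **Proposition (paper, Proposition 3.1).** Let `f ∈ P` be bihomogeneous of bidegree
`(a,b)` and `U_j` the presentation module of `H^n_{P₊}(P/fP)_j`.  Then
`I_{j,u} = I_{j-1, z₁u}` for all `j ≤ -n` (i.e. `j = -n-t`, `t ∈ ℕ`) and all monomials
`z^u` with `|u| = -n-j = t`. -/
theorem initial_coefficient_ideals_stable
    (K : Type) [Field K] (m n : ℕ) (hn : 0 < n)
    (f : MvPolynomial (Fin n) (MvPolynomial (Fin m) K)) (a b : ℕ)
    (hf : IsBihom n K m f a b)
    (t : ℕ) (u : Fin n →₀ ℕ) (hu : tdeg u = t) :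
    iniIdeal n K m (Uf n K m f t b) u =
      iniIdeal n K m (Uf n K m f (t + 1) b) (u + Finsupp.single (⟨0, hn⟩ : Fin n) 1) := by
  classical
  set i0 : Fin n := ⟨0, hn⟩ with hi0
  set e₁ : Fin n →₀ ℕ := Finsupp.single i0 1 with he₁
  have lex_add_iff : ∀ v w : Fin n →₀ ℕ, toLex (v + e₁) ≤ toLex (w + e₁) ↔ toLex v ≤ toLex w := by
    intro v w
    rw [toLex_add, toLex_add, add_le_add_iff_right]
  have lex_zero : ∀ v w : Fin n →₀ ℕ, v i0 < w i0 → toLex v ≤ toLex w := by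
    intro v w h
    refine le_of_lt (Finsupp.Lex.lt_iff.mpr ⟨i0, ?_, h⟩)
    intro j hj
    exact absurd hj (by simp [hi0, Fin.lt_def])
  unfold iniIdeal
  congr 1
  ext p
  constructor
  · rintro ⟨h, ⟨g, hg, rfl⟩, hpu, hne, hin⟩
    set g' : Wmod (MvPolynomial (Fin m) K) n := Finsupp.mapDomain (· + e₁) g with hg'
    have hg'mem : g' ∈ Fk (MvPolynomial (Fin m) K) n (t + 1 + b) := by
      rw [Fk, Finsupp.mem_supported]
      intro c hc
      have := Finsupp.mapDomain_support hc
      rw [Finset.mem_image] at this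
      obtain ⟨d, hd, rfl⟩ := this
      have hdmem : tdeg d = t + b :=
        (Finsupp.mem_supported _ _).mp hg hd
      have : tdeg (d + e₁) = tdeg d + 1 := by rw [tdeg_add', he₁, tdeg_single_one']
      rw [Set.mem_setOf_eq, this, hdmem]
      omega
    refine ⟨contract (MvPolynomial (Fin m) K) n f g', ⟨g', hg'mem, rfl⟩, ?_, ?_, ?_⟩
    · rw [hg', contract_mapDomain']; exact hpu
    · rw [hg', contract_mapDomain']; exact hne
    · intro v hv
      by_cases h0 : v i0 = 0
      · refine lex_zero _ _ ?_
        rw [Finsupp.add_apply, he₁, Finsupp.single_apply, if_pos rfl, h0]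
        omega
      · have hle : e₁ ≤ v := by
          rw [he₁, Finsupp.single_le_iff]; omega
        have hw : v - e₁ + e₁ = v := tsub_add_cancel_of_le hle
        rw [← hw] at hv ⊢
        rw [hg', contract_mapDomain'] at hv
        rw [lex_add_iff]
        exact hin _ hv
  · rintro ⟨h, ⟨g', hg', rfl⟩, hpu, hne, hin⟩
    set g : Wmod (MvPolynomial (Fin m) K) n :=
      Finsupp.comapDomain (· + e₁) g' (add_left_injective e₁).injOn with hgdef
    have hgmem : g ∈ Fk (MvPolynomial (Fin m) K) n (t + b) := by
      rw [Fk, Finsupp.mem_supported]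
      intro d hd
      have hne' : g' (d + e₁) ≠ 0 := by
        have := Finsupp.mem_support_iff.mp hd
        rwa [hgdef, Finsupp.comapDomain_apply] at this
      have : d + e₁ ∈ g'.support := Finsupp.mem_support_iff.mpr hne'
      have h1 : tdeg (d + e₁) = t + 1 + b := (Finsupp.mem_supported _ _).mp hg' this
      rw [tdeg_add', he₁, tdeg_single_one'] at h1
      simp only [Set.mem_setOf_eq]
      omega
    refine ⟨contract (MvPolynomial (Fin m) K) n f g, ⟨g, hgmem, rfl⟩, ?_, ?_, ?_⟩
    · rw [hgdef, contract_comapDomain']; exact hpu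
    · rw [hgdef, contract_comapDomain']; exact hne
    · intro w hw
      rw [hgdef, contract_comapDomain'] at hw
      rw [← lex_add_iff]
      exact hin _ hw


end Paper
end
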